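/- Let a = (a_n)_{n∈ℕ} be a sequence in an ω-convex space A. Then the canonical a-solution r_n := ∑_{i∈ℕ} 2^{-i-1}·a_{n+i} is indeed an a-solution, i.e., r_n = a_n +_{1/2} r_{n+1} for all n. -/

import Mathlib

open scoped NNReal

/-- An ω-convex (superconvex) space: a set with countable convex combinations
`∑_n p_n·x_n` for distributions `p` on `ℕ`, satisfying the projection and
composition laws.  The operation `comb p x` is only constrained (hence only
meaningful) when `p` is a distribution. -/
structure OmegaConvexSpace (X : Type) where
  comb : (ℕ → ℝ≥0) → (ℕ → X) → X
  proj : ∀ (p : ℕ → ℝ≥0) (m : ℕ), (∀ n, p n = if n = m then 1 else 0) →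
    ∀ x : ℕ → X, comb p x = x m
  compose : ∀ (p : ℕ → ℝ≥0) (q : ℕ → ℕ → ℝ≥0) (r : ℕ → ℝ≥0),
    (∑' n, p n) = 1 → (∀ n, (∑' m, q n m) = 1) →
    (∀ m, r m = ∑' n, p n * q n m) →
    ∀ x : ℕ → X, comb p (fun n => comb (q n) x) = comb r x

/-- The binary combination `x +_{1/2} y`, as a countable combination with
weights `1/2, 1/2, 0, 0, …`. -/
noncomputable def OmegaConvexSpace.half {X : Type} (C : OmegaConvexSpace X)
    (x y : X) : X :=
  C.comb (fun n => if n = 0 then 2⁻¹ else if n = 1 then 2⁻¹ else 0)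
    (fun n => if n = 0 then x else y)

/-- The geometric distribution `n ↦ 2^{-n-1}` on `ℕ`. -/
noncomputable def geomHalf : ℕ → ℝ≥0 := fun n => 2⁻¹ ^ (n + 1)

lemma half_lt_one : (2⁻¹ : ℝ≥0) < 1 := by
  rw [← NNReal.coe_lt_coe]; norm_num

lemma geomHalf_tsum : ∑' n, geomHalf n = 1 := by
  have h : ∀ n, geomHalf n = 2⁻¹ * 2⁻¹ ^ n := by
    intro n; simp [geomHalf, pow_succ, mul_comm]
  simp_rw [h]
  rw [NNReal.tsum_mul_left, tsum_geometric_nnreal half_lt_one]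
  apply NNReal.coe_injective
  push_cast [NNReal.coe_sub (le_of_lt half_lt_one)]
  norm_num

lemma geomHalf_summable : Summable geomHalf := by
  refine NNReal.summable_of_le (g := geomHalf) (f := fun n => 2⁻¹ ^ n) ?_
    (NNReal.summable_geometric half_lt_one)
  intro n
  simp only [geomHalf]
  rw [pow_succ]
  exact mul_le_of_le_one_right (zero_le) (le_of_lt half_lt_one)

/-- The shifted geometric distribution. -/
noncomputable def geomShift : ℕ → ℝ≥0 := fun m => if m = 0 then 0 else geomHalf (m - 1)

lemma geomShift_hasSum : HasSum geomShift 1 := by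
  have hinj : Function.Injective (fun n : ℕ => n + 1) := fun a b h => by simpa using h
  have h0 : ∀ m ∉ Set.range (fun n : ℕ => n + 1), geomShift m = 0 := by
    intro m hm
    have hm0 : m = 0 := by
      by_contra h
      exact hm ⟨m - 1, by simp; omega⟩
    simp [geomShift, hm0]
  rw [← hinj.hasSum_iff h0]
  have hcomp : geomShift ∘ (fun n : ℕ => n + 1) = geomHalf := by
    funext n; simp [geomShift]
  rw [hcomp]
  have h := geomHalf_summable.hasSum
  rwa [geomHalf_tsum] at h

lemma geomShift_summable : Summable geomShift := ⟨1, geomShift_hasSum⟩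

lemma geomShift_tsum : ∑' m, geomShift m = 1 := geomShift_hasSum.tsum_eq

/-- The canonical `a`-solution `r_n = ∑_i 2^{-i-1}·a_{n+i}` is indeed an
`a`-solution: `r_n = a_n +_{1/2} r_{n+1}` for all `n`. -/
theorem stmt_17 {X : Type} (C : OmegaConvexSpace X) (a : ℕ → X) :
    ∀ n : ℕ, C.comb geomHalf (fun i => a (n + i)) =
      C.half (a n) (C.comb geomHalf (fun i => a (n + 1 + i))) := by
  intro n
  set x : ℕ → X := fun i => a (n + i) with hx
  -- Step A: the tail is `C.comb geomShift x`.
  have stepA : C.comb geomHalf (fun i => a (n + 1 + i)) = C.comb geomShift x := by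
    have h1 : (fun i => a (n + 1 + i)) =
        fun i => C.comb (fun m => if m = i + 1 then 1 else 0) x := by
      funext i
      rw [C.proj (fun m => if m = i + 1 then 1 else 0) (i + 1) (fun _ => rfl) x]
      show a (n + 1 + i) = a (n + (i + 1))
      congr 1; omega
    rw [h1]
    apply C.compose geomHalf (fun i m => if m = i + 1 then 1 else 0) geomShift
      geomHalf_tsum (fun i => tsum_ite_eq (i + 1) (fun _ => (1 : ℝ≥0)))
    intro m
    cases m with
    | zero => simp [geomShift]
    | succ k =>
      have : ∀ i : ℕ, geomHalf i * (if k + 1 = i + 1 then 1 else 0) =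
          if i = k then geomHalf k else 0 := by
        intro i
        by_cases h : i = k
        · simp [h]
        · have h' : ¬(k + 1 = i + 1) := by omega
          simp [h, h', Ne.symm h]
      simp only [geomShift, Nat.succ_ne_zero, if_false, Nat.add_sub_cancel]
      rw [show (∑' i, geomHalf i * if k + 1 = i + 1 then 1 else 0)
            = ∑' i, if i = k then geomHalf k else 0 from tsum_congr this,
        tsum_ite_eq k (fun _ => geomHalf k)]
  -- Step B: assemble the half-combination.
  rw [stepA]
  unfold OmegaConvexSpace.half
  set p : ℕ → ℝ≥0 := fun k => if k = 0 then 2⁻¹ else if k = 1 then 2⁻¹ else 0 with hp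
  set Q : ℕ → ℕ → ℝ≥0 :=
    fun k => if k = 0 then (fun m => if m = 0 then 1 else 0) else geomShift with hQ
  have hbody : (fun k => if k = 0 then a n else C.comb geomShift x) =
      fun k => C.comb (Q k) x := by
    funext k
    cases k with
    | zero =>
      simp only [hQ, if_pos rfl]
      rw [C.proj (fun m => if m = 0 then 1 else 0) 0 (fun _ => rfl) x]
      show a n = a (n + 0)
      congr 1
    | succ j => simp [hQ]
  rw [hbody]
  have hp_tsum : ∑' k, p k = 1 := by
    rw [tsum_eq_sum (s := {0, 1}) (by intro b hb; simp at hb; simp [hp, hb])]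
    rw [show ({0, 1} : Finset ℕ) = {0} ∪ {1} by rfl]
    rw [Finset.sum_union (by simp)]
    simp only [Finset.sum_singleton, hp, if_pos rfl]
    norm_num
  have hQ_tsum : ∀ k, ∑' m, Q k m = 1 := by
    intro k
    cases k with
    | zero => simpa [hQ] using tsum_ite_eq 0 (fun _ => (1 : ℝ≥0))
    | succ j => simpa [hQ] using geomShift_tsum
  have hr : ∀ m, geomHalf m = ∑' k, p k * Q k m := by
    intro m
    rw [tsum_eq_sum (s := {0, 1}) (by intro b hb; simp at hb; simp [hp, hb])]
    rw [show ({0, 1} : Finset ℕ) = {0} ∪ {1} by rfl]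
    rw [Finset.sum_union (by simp)]
    simp only [Finset.sum_singleton, hp, hQ, if_pos rfl]
    norm_num
    cases m with
    | zero => simp [geomShift, geomHalf]
    | succ k =>
      simp only [geomShift, geomHalf, Nat.succ_ne_zero, if_false,
        Nat.add_sub_cancel, mul_zero, zero_add]
      ring
  exact (C.compose p Q geomHalf hp_tsum hQ_tsum hr x).symm
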